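/- There exists a finite set S of 142 cells in ℤ² such that S is connected under edge-adjacency (cells (a,b) and (c,d) are adjacent iff |a-c|+|b-d|=1) and no four cells of S are equally spaced on a straight line (i.e., there are no p ∈ ℤ² and nonzero v ∈ ℤ² with p, p+v, p+2v, p+3v all in S). -/

import Mathlib

set_option maxRecDepth 100000
set_option maxHeartbeats 4000000

open scoped Classical

/-- Two cells of `ℤ²` are adjacent iff they differ by a unit vector. -/
def Adj (p q : ℤ × ℤ) : Prop :=
  (p.1 - q.1).natAbs + (p.2 - q.2).natAbs = 1

/-- A finite set of cells is connected under edge-adjacency. -/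
def ConnectedIn (S : Finset (ℤ × ℤ)) : Prop :=
  ∀ p ∈ S, ∀ q ∈ S,
    Relation.ReflTransGen (fun a b => a ∈ S ∧ b ∈ S ∧ Adj a b) p q

/-- A polyomino: a finite nonempty edge-connected subset of `ℤ²`. -/
def IsPolyomino (S : Finset (ℤ × ℤ)) : Prop :=
  S.Nonempty ∧ ConnectedIn S

/-- Admissible: no four cells equally spaced on a straight line. -/
def Admissible (S : Finset (ℤ × ℤ)) : Prop :=
  ¬ ∃ (p v : ℤ × ℤ), v ≠ 0 ∧ p ∈ S ∧ p + v ∈ S ∧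
      p + (2 : ℤ) • v ∈ S ∧ p + (3 : ℤ) • v ∈ S

/-- Degree of a cell in the adjacency graph restricted to `S`. -/
noncomputable def degIn (S : Finset (ℤ × ℤ)) (p : ℤ × ℤ) : ℕ :=
  (S.filter fun q => Adj p q).card

/-- A path polyomino: either a single cell, or a connected set where every cell
has degree at most 2 and exactly two cells have degree 1. -/
def IsPathPoly (S : Finset (ℤ × ℤ)) : Prop :=
  IsPolyomino S ∧
    (S.card = 1 ∨
      ((∀ p ∈ S, degIn S p ≤ 2) ∧ (S.filter fun p => degIn S p = 1).card = 2))

/-- A loop: a polyomino all of whose cells have degree exactly 2. -/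
def IsLoop (S : Finset (ℤ × ℤ)) : Prop :=
  IsPolyomino S ∧ ∀ p ∈ S, degIn S p = 2

/-- Graph distance within `S` (shortest walk staying in `S`). -/
noncomputable def distIn (S : Finset (ℤ × ℤ)) (p q : ℤ × ℤ) : ℕ :=
  sInf {n | ∃ f : ℕ → ℤ × ℤ, f 0 = p ∧ f n = q ∧ (∀ i ≤ n, f i ∈ S) ∧
    ∀ i < n, Adj (f i) (f (i + 1))}

/-- Graph diameter of `S`. -/
noncomputable def diamIn (S : Finset (ℤ × ℤ)) : ℕ :=
  sSup {d | ∃ p ∈ S, ∃ q ∈ S, distIn S p q = d}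

/-- Isometries of the square lattice: bijections of `ℤ²` preserving squared
Euclidean distance (compositions of translations, 90° rotations, reflections). -/
def IsLatticeIso (f : ℤ × ℤ → ℤ × ℤ) : Prop :=
  Function.Bijective f ∧ ∀ p q : ℤ × ℤ,
    ((f p).1 - (f q).1) ^ 2 + ((f p).2 - (f q).2) ^ 2 =
      (p.1 - q.1) ^ 2 + (p.2 - q.2) ^ 2

/-- Two finite cell sets are equivalent up to a lattice isometry. -/
def IsoEquiv (S T : Finset (ℤ × ℤ)) : Prop :=
  ∃ f, IsLatticeIso f ∧ S.image f = T

/- ===== Auxiliary material for the existence proof ===== -/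

instance instDecAdj : ∀ p q, Decidable (Adj p q) := fun p q =>
  inferInstanceAs (Decidable (_ = 1))

lemma adj_symm {p q : ℤ × ℤ} (h : Adj p q) : Adj q p := by
  unfold Adj at *; omega

/-- A list is "grown" if each element is adjacent to some later element. -/
def grown : List (ℤ × ℤ) → Prop
  | [] => True
  | [_] => True
  | a :: l => (∃ b ∈ l, Adj a b) ∧ grown l

instance : DecidablePred grown := by
  intro l; induction l with
  | nil => exact .isTrue trivial
  | cons a l ih =>
    cases l with
    | nil => exact .isTrue trivial
    | cons b m => exact @instDecidableAnd _ _ _ ih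

lemma grown_connects (S : Finset (ℤ × ℤ)) :
    ∀ (l : List (ℤ × ℤ)), grown l → (∀ x ∈ l, x ∈ S) →
    ∀ h : l ≠ [], ∀ p ∈ l,
      Relation.ReflTransGen (fun a b => a ∈ S ∧ b ∈ S ∧ Adj a b) p (l.getLast h) := by
  intro l
  induction l with
  | nil => intro _ _ h; exact absurd rfl h
  | cons a l ih =>
    intro hg hsub h p hp
    cases l with
    | nil =>
      simp at hp; subst hp
      exact Relation.ReflTransGen.refl
    | cons b m =>
      obtain ⟨⟨c, hc, hadj⟩, hg'⟩ := hg
      have hsub' : ∀ x ∈ b :: m, x ∈ S := fun x hx => hsub x (List.mem_cons_of_mem _ hx)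
      have hlast : (a :: b :: m).getLast h = (b :: m).getLast (by simp) := by
        simp [List.getLast_cons]
      rw [hlast]
      rcases List.mem_cons.mp hp with rfl | hp'
      · have step : Relation.ReflTransGen (fun a b => a ∈ S ∧ b ∈ S ∧ Adj a b) p c :=
          Relation.ReflTransGen.single ⟨hsub p (by simp), hsub' c hc, hadj⟩
        exact step.trans (ih hg' hsub' (by simp) c hc)
      · exact ih hg' hsub' (by simp) p hp'

lemma connectedIn_of_grown (l : List (ℤ × ℤ)) (hne : l ≠ []) (hg : grown l)
    (S : Finset (ℤ × ℤ)) (hS : ∀ x, x ∈ S ↔ x ∈ l) : ConnectedIn S := by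
  intro p hp q hq
  have hsub : ∀ x ∈ l, x ∈ S := fun x hx => (hS x).2 hx
  have h1 := grown_connects S l hg hsub hne p ((hS p).1 hp)
  have h2 := grown_connects S l hg hsub hne q ((hS q).1 hq)
  have hsymm : Symmetric (fun a b => a ∈ S ∧ b ∈ S ∧ Adj a b) :=
    fun a b ⟨ha, hb, hab⟩ => ⟨hb, ha, adj_symm hab⟩
  haveI : Std.Symm (fun a b => a ∈ S ∧ b ∈ S ∧ Adj a b) := ⟨fun a b h => hsymm h⟩
  exact h1.trans (Relation.ReflTransGen.stdSymm.symm _ _ h2)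

lemma admissible_of (S : Finset (ℤ × ℤ))
    (h : ∀ p ∈ S, ∀ q ∈ S, p + (2:ℤ) • (q - p) ∈ S → p + (3:ℤ) • (q - p) ∈ S → q = p) :
    Admissible S := by
  rintro ⟨p, v, hv, hp, hpv, h2, h3⟩
  have hq : p + v - p = v := by ring
  have := h p hp (p + v) hpv (by rw [hq]; exact h2) (by rw [hq]; exact h3)
  exact hv (by rwa [add_eq_left] at this)

/-- The 142 cells, listed in an order where each cell is adjacent to a later one. -/
def cells142 : List (ℤ × ℤ) := [(-15,0), (-15,1), (-20,4), (-15,2), (-19,4), (-16,2), (-19,3), (-17,2), (-18,3), (-17,3), (-17,4), (-16,4), (-16,5), (-15,5), (-14,5), (-14,4), (-13,4), (-12,4), (-12,5), (-12,7), (-11,5), (-11,7), (-11,6), (-10,6), (-9,4), (-9,6), (-9,5), (-8,5), (-7,5), (-7,4), (-7,3), (-8,3), (-9,2), (-8,2), (-8,1), (-6,2), (-7,1), (-6,1), (-6,0), (-4,-1), (-5,0), (-4,0), (-4,1), (-3,1), (-3,2), (-2,2), (-1,2), (0,0), (-1,1), (0,1), (1,1), (1,2), (2,2), (2,3), (2,4),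 (1,4), (1,5), (1,6), (2,6), (2,7), (4,7), (3,7), (3,8), (1,9), (3,9), (2,9), (2,10), (1,12), (2,11), (1,11), (0,11), (-1,9), (0,10), (-1,10), (-2,10), (-2,11), (-1,12), (-2,12), (-3,12), (-3,13), (-4,14), (-3,14), (-2,14), (-2,15), (-1,15), (-1,16), (-1,17), (-2,17), (-2,18), (-2,19), (-1,19), (0,21), (-1,20), (0,20), (1,20), (1,19), (2,19), (3,19), (3,20), (4,20), (4,22), (4,21), (5,21), (6,19), (6,21), (6,20), (7,20), (8,20), (9,19), (8,19), (8,18), (7,18), (7,17), (7,16), (9,17), (8,16), (9,16), (12,14), (9,15), (11,14), (10,15), (11,15), (11,16), (12,16), (12,17), (13,17), (14,17), (14,16), (15,16), (16,16), (16,17), (19,18), (17,17), (18,18), (17,18), (17,19), (16,19), (13,20), (15,19), (14,20), (15,20), (15,21)]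

/-- Bitmask encoding of `cells142`: bit `(x+20) + 64*(y+1)` is set iff `(x,y)` is a cell. -/
def mask142 : Nat := 2192166381902127665945373739617275110077199814870768799639355332664685014972383170223654650498056501783544100988943893969784976895381655304013801576149329985938210785295232569970521117643995978219687669330280059566469180211027510947267816906137139591843603659740427687009772894059430475273837311709144011597154385852976963086172016301723986340083716435064972186958611047244976327669262767577895206123956096158897233552065805920019974328194528150880256

def inS (p : ℤ × ℤ) : Bool :=
  decide (0 ≤ p.1 + 20) && decide (p.1 + 20 < 64) && decide (0 ≤ p.2 + 1) &&
    Nat.testBit mask142 ((p.1 + 20).toNat + 64 * (p.2 + 1).toNat)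

lemma mem_imp_inS : ∀ p ∈ cells142, inS p = true := by decide

lemma key142 : ∀ p ∈ cells142, ∀ q ∈ cells142,
    inS (2 * q.1 - p.1, 2 * q.2 - p.2) = true →
    inS (3 * q.1 - 2 * p.1, 3 * q.2 - 2 * p.2) = true → q = p := by decide

def S142 : Finset (ℤ × ℤ) := ⟨(cells142 : Multiset (ℤ × ℤ)), by decide⟩

theorem exists_admissible_polyomino_card_142 :
    ∃ S : Finset (ℤ × ℤ), IsPolyomino S ∧ Admissible S ∧ S.card = 142 := by
  refine ⟨S142, ?_, ?_, by decide⟩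
  · have hmem : ∀ x, x ∈ S142 ↔ x ∈ cells142 := fun x => by
      simp [S142, Finset.mem_mk]
    exact ⟨⟨(0,0), (hmem _).2 (by decide)⟩,
      connectedIn_of_grown cells142 (by decide) (by decide) S142 hmem⟩
  · apply admissible_of
    intro p hp q hq h2 h3
    have hmem : ∀ x, x ∈ S142 ↔ x ∈ cells142 := fun x => by
      simp [S142, Finset.mem_mk]
    rw [hmem] at hp hq h2 h3
    have e2 : p + (2:ℤ) • (q - p) = (2 * q.1 - p.1, 2 * q.2 - p.2) := by
      ext <;> simp <;> ring
    have e3 : p + (3:ℤ) • (q - p) = (3 * q.1 - 2 * p.1, 3 * q.2 - 2 * p.2) := by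
      ext <;> simp <;> ring
    exact key142 p hp q hq
      (mem_imp_inS _ (e2 ▸ h2)) (mem_imp_inS _ (e3 ▸ h3))
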